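/- Suppose 𝒫 is a set of d-dimensional k-templates and X is an infinite set. If 𝒫 = ∅, then χ(L(X^d, 𝒫)) = 1. If 𝒫 ≠ ∅, then χ(L(X^d, 𝒫)) = |X|^{-(e − 1)}, where e = min{e(P) : P ∈ 𝒫}. -/

import Mathlib

/-- `Q` is a homomorphic image of the `d`-dimensional template `P`: there is an injective
map `f` from `P` onto `Q` such that whenever `x, y ∈ P` agree in coordinate `i`, so do
`f x` and `f y`. -/
def IsHomImage {d : ℕ} {α β : Type} (P : Set (Fin d → α)) (Q : Set (Fin d → β)) : Prop :=
  ∃ f : (Fin d → α) → (Fin d → β), Set.InjOn f P ∧ Q = f '' P ∧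
    ∀ x ∈ P, ∀ y ∈ P, ∀ i : Fin d, x i = y i → f x i = f y i

/-- The edge set of the multi-template hypergraph `L(V^d, 𝓟)`: the edges are those subsets
of `V^d` that are homomorphic images of some template `P ∈ 𝓟`. -/
def multiTemplateEdges {d : ℕ} {α : Type} (V : Type) (𝓟 : Set (Set (Fin d → α))) :
    Set (Set (Fin d → V)) :=
  {Q | ∃ P ∈ 𝓟, IsHomImage P Q}

/-- `φ` is a proper coloring of the hypergraph with edge set `E`: no edge is monochromatic. -/
def IsProperColoring {V C : Type*} (E : Set (Set V)) (φ : V → C) : Prop :=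
  ∀ s ∈ E, ∃ x ∈ s, ∃ y ∈ s, φ x ≠ φ y

/-- The chromatic number of the hypergraph with vertex set `V` and edge set `E`: the least
cardinal `κ` such that there is a proper coloring with `κ` colors. -/
noncomputable def chrNum {V : Type} (E : Set (Set V)) : Cardinal :=
  sInf {κ : Cardinal | ∃ (C : Type) (φ : V → C), Cardinal.mk C = κ ∧ IsProperColoring E φ}

/-- `κ⁺ᵈ`, the `d`-fold cardinal successor of `κ`. -/
noncomputable def cardPlus (κ : Cardinal) (d : ℕ) : Cardinal := (Order.succ)^[d] κ

/-- `κ⁻ᵈ`, the least cardinal `μ` with `μ⁺ᵈ ≥ κ`. -/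
noncomputable def cardMinus (κ : Cardinal) (d : ℕ) : Cardinal :=
  sInf {μ : Cardinal | κ ≤ cardPlus μ d}

/-- The induced subhypergraph `H[X]`: vertex set `X`, edges the edges of `H` contained
in `X`. -/
def inducedEdges {V : Type} (E : Set (Set V)) (X : Set V) : Set (Set X) :=
  {s | (Subtype.val '' s) ∈ E}

/-- `I` is a distinguisher for the template `P`: any two distinct elements of `P` differ in
some coordinate in `I`. -/
def IsDistinguisher {d : ℕ} {α : Type} (P : Set (Fin d → α)) (I : Set (Fin d)) : Prop :=
  ∀ x ∈ P, ∀ y ∈ P, x ≠ y → ∃ i ∈ I, x i ≠ y i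

/-- `e(P)`, the least cardinality of a distinguisher for the template `P`. -/
noncomputable def eTemplate {d : ℕ} {α : Type} (P : Set (Fin d → α)) : ℕ :=
  sInf {m : ℕ | ∃ I : Set (Fin d), I.ncard = m ∧ IsDistinguisher P I}




open Cardinal Set Function

lemma cardPlus_zero (a : Cardinal) : cardPlus a 0 = a := rfl

lemma cardPlus_succ (a : Cardinal) (n : ℕ) :
    cardPlus a (n + 1) = Order.succ (cardPlus a n) :=
  Function.iterate_succ_apply' _ _ _

lemma le_cardPlus (a : Cardinal) (n : ℕ) : a ≤ cardPlus a n := by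
  induction n with
  | zero => exact le_of_eq (cardPlus_zero a).symm
  | succ n ih => rw [cardPlus_succ]; exact ih.trans (Order.le_succ _)

lemma cardPlus_le_cardPlus_succ (a : Cardinal) (n : ℕ) :
    cardPlus a n ≤ cardPlus a (n + 1) := by
  rw [cardPlus_succ]; exact Order.le_succ _

lemma cardPlus_lt_aleph0 {a : Cardinal} (h : a < ℵ₀) (n : ℕ) : cardPlus a n < ℵ₀ := by
  induction n with
  | zero => exact h
  | succ n ih =>
    rw [cardPlus_succ]
    obtain ⟨m, hm⟩ := Cardinal.lt_aleph0.mp ih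
    rw [hm]
    have h1 : (m : Cardinal) < ((m + 1 : ℕ) : Cardinal) := by exact_mod_cast Nat.lt_succ_self m
    exact lt_of_le_of_lt (Order.succ_le_of_lt h1) (Cardinal.nat_lt_aleph0 (m + 1))

lemma aleph0_le_cardPlus {a : Cardinal} (h : ℵ₀ ≤ a) (n : ℕ) : ℵ₀ ≤ cardPlus a n :=
  h.trans (le_cardPlus a n)

lemma pigeonhole {Y C : Type} (h : Y → C) (r : ℕ) (hcard : #C * r < #Y) :
    ∃ t : Fin r → Y, Function.Injective t ∧ ∀ j j', h (t j) = h (t j') := by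
  have hex : ∃ c : C, (r : Cardinal) ≤ #{y // h y = c} := by
    by_contra hc
    push_neg at hc
    have hY : #Y ≤ #C * r := by
      have e : #Y = #(Σ c : C, {y // h y = c}) :=
        Cardinal.mk_congr (Equiv.sigmaFiberEquiv h).symm
      rw [e, Cardinal.mk_sigma]
      calc (Cardinal.sum fun c => #{y // h y = c})
          ≤ Cardinal.sum fun _ : C => (r : Cardinal) :=
            Cardinal.sum_le_sum _ _ (fun c => (hc c).le)
        _ = #C * r := Cardinal.sum_const' C r
    exact absurd hcard (not_lt.mpr hY)
  obtain ⟨c, hc⟩ := hex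
  rw [← Cardinal.mk_fin r] at hc
  obtain ⟨f⟩ := (Cardinal.le_def _ _).mp hc
  exact ⟨fun j => (f j).1, fun j j' hjj => f.injective (Subtype.ext hjj),
    fun j j' => by rw [(f j).2, (f j').2]⟩

lemma mk_arrow_le {A γ : Type} [Finite A] {c : Cardinal} (hc : ℵ₀ ≤ c) (h : #γ ≤ c) :
    #(A → γ) ≤ c := by
  have := Fintype.ofFinite A
  have e : #(A → γ) = #γ ^ (Fintype.card A : Cardinal) := by
    rw [← Cardinal.power_def, Cardinal.mk_fintype A]
  rw [e, Cardinal.power_natCast]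
  calc #γ ^ (Fintype.card A) ≤ c ^ (Fintype.card A) := by
        exact pow_le_pow_left₀ zero_le h _
    _ ≤ c := Cardinal.power_nat_le hc

lemma ubCore (μ : Cardinal) (hμ : ℵ₀ ≤ μ) :
    ∀ (n d : ℕ) (X : Type), #X ≤ cardPlus μ n →
    ∃ (C : Type) (φ : (Fin d → X) → C), #C ≤ μ ∧
      ∀ c : C, ∃ I : Set (Fin d), I.ncard ≤ n ∧
        ∀ x y : Fin d → X, φ x = c → φ y = c → x ≠ y → ∃ i ∈ I, x i ≠ y i := by
  intro n
  induction n with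
  | zero =>
    intro d X hX
    refine ⟨Fin d → X, id, ?_, ?_⟩
    · have e : #(Fin d → X) = #X ^ (d : Cardinal) := by
        rw [← Cardinal.mk_fin d, Cardinal.power_def]
      rw [e, Cardinal.power_natCast]
      calc #X ^ d ≤ μ ^ d := pow_le_pow_left₀ zero_le hX _
        _ ≤ μ := Cardinal.power_nat_le hμ
    · intro c
      refine ⟨∅, by simp, ?_⟩
      intro x y hx hy hxy
      exact absurd (hx.trans hy.symm) hxy
  | succ n IH =>
    intro d X hX
    rcases Nat.eq_zero_or_pos d with rfl | hd
    · refine ⟨PUnit, fun _ => PUnit.unit, by simp [Cardinal.mk_punit]; exact one_le_aleph0.trans hμ, ?_⟩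
      intro c
      refine ⟨∅, by simp, ?_⟩
      intro x y _ _ hxy
      exact absurd (funext fun i => i.elim0) hxy
    obtain ⟨d', rfl⟩ : ∃ d', d = d' + 1 := ⟨d - 1, by omega⟩
    classical
    set lam := cardPlus μ n with hlam
    have hXΛ : #X ≤ Order.succ lam := by rwa [cardPlus_succ] at hX
    set W := (Order.succ lam).ord.ToType with hWdef
    have hW : #W = Order.succ lam := Cardinal.mk_ord_toType _
    obtain ⟨ι⟩ : Nonempty (X ↪ W) := by
      rw [← Cardinal.le_def]
      rw [hW]; exact hXΛ
    -- the λ-sized palette type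
    set L := Quotient.out lam with hLdef
    have hL : #L = lam := Cardinal.mk_out lam
    have hlaminf : ℵ₀ ≤ lam := aleph0_le_cardPlus hμ n
    -- injections from initial segments into L
    have hj : ∀ β : W, ∃ jf : Set.Iio β → L, Function.Injective jf := by
      intro β
      have h1 : #(Set.Iio β) < Order.succ lam := Cardinal.mk_Iio_toType_ord_lt β
      have h2 : #(Set.Iio β) ≤ #L := by
        rw [hL]; exact Order.lt_succ_iff.mp h1
      obtain ⟨f⟩ := (Cardinal.le_def _ _).mp h2
      exact ⟨f, f.injective⟩
    choose jmap hjinj using hj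
    -- IH coloring on Option L in dimension d'
    have hT : #(Option L) ≤ cardPlus μ n := by
      rw [Cardinal.mk_option, hL, Cardinal.add_one_eq hlaminf]
    obtain ⟨C₀, ψ, hC₀, hψ⟩ := IH d' (Option L) hT
    -- max and argmax
    have huniv : (Finset.univ : Finset (Fin (d' + 1))).Nonempty := ⟨0, Finset.mem_univ 0⟩
    set B : (Fin (d' + 1) → X) → W := fun x => Finset.univ.sup' huniv (fun i => ι (x i)) with hBdef
    have hBmem : ∀ x, ∃ i, ι (x i) = B x := by
      intro x
      obtain ⟨i, _, h⟩ := Finset.exists_mem_eq_sup' huniv (fun i => ι (x i))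
      exact ⟨i, h.symm⟩
    set M : (Fin (d' + 1) → X) → Fin (d' + 1) := fun x => Classical.choose (hBmem x) with hMdef
    have hM : ∀ x, ι (x (M x)) = B x := fun x => Classical.choose_spec (hBmem x)
    have hle : ∀ (x : Fin (d' + 1) → X) i, ι (x i) ≤ B x := fun x i =>
      Finset.le_sup' (fun i => ι (x i)) (Finset.mem_univ i)
    set F : W → W → Option L := fun β w =>
      if h : w < β then some (jmap β ⟨w, h⟩) else none
      with hFdef
    have hFinj : ∀ β u v, u ≤ β → v ≤ β → F β u = F β v → u = v := by
      intro β u v hu hv h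
      simp only [hFdef] at h
      by_cases h1 : u < β
      · by_cases h2 : v < β
        · rw [dif_pos h1, dif_pos h2] at h
          have := hjinj β (Option.some.inj h)
          exact congrArg Subtype.val this
        · rw [dif_pos h1, dif_neg h2] at h
          exact absurd h (by simp)
      · by_cases h2 : v < β
        · rw [dif_neg h1, dif_pos h2] at h
          exact absurd h (by simp)
        · rw [le_antisymm hu (not_lt.mp h1), le_antisymm hv (not_lt.mp h2)]
    set YF : (Fin (d' + 1) → X) → Fin d' → Option L := fun x t =>
      F (B x) (ι (x ((M x).succAbove t))) with hYFdef
    refine ⟨Fin (d' + 1) × C₀, fun x => (M x, ψ (YF x)), ?_, ?_⟩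
    · have : #(Fin (d' + 1) × C₀) = ((d' + 1 : ℕ) : Cardinal) * #C₀ := by
        simp [Cardinal.mk_prod]
      rw [this]
      calc ((d' + 1 : ℕ) : Cardinal) * #C₀ ≤ μ * μ :=
            mul_le_mul' ((Cardinal.nat_lt_aleph0 _).le.trans hμ) hC₀
        _ = μ := Cardinal.mul_eq_self hμ
    · rintro ⟨m, c₀⟩
      obtain ⟨I₀, hI₀n, hI₀⟩ := hψ c₀
      refine ⟨insert m (m.succAbove '' I₀), ?_, ?_⟩
      · calc (insert m (m.succAbove '' I₀)).ncard ≤ (m.succAbove '' I₀).ncard + 1 :=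
              Set.ncard_insert_le _ _
          _ ≤ I₀.ncard + 1 := by
              have := Set.ncard_image_le (f := m.succAbove) (s := I₀) (Set.toFinite I₀)
              omega
          _ ≤ n + 1 := by omega
      · intro x y hx hy hxy
        have hMx : M x = m := congrArg Prod.fst hx
        have hMy : M y = m := congrArg Prod.fst hy
        have hψx : ψ (YF x) = c₀ := congrArg Prod.snd hx
        have hψy : ψ (YF y) = c₀ := congrArg Prod.snd hy
        by_cases hmm : x m = y m
        · -- same max value
          have hBxy : B x = B y := by
            rw [← hM x, ← hM y, hMx, hMy, hmm]
          have hYne : YF x ≠ YF y := by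
            intro he
            apply hxy
            funext i
            rcases eq_or_ne i m with rfl | him
            · exact hmm
            · obtain ⟨t, ht⟩ := Fin.exists_succAbove_eq him
              have h2 := congrFun he t
              simp only [hYFdef, hMx, hMy, ht] at h2
              rw [← hBxy] at h2
              have := hFinj (B x) _ _ (hle x i) (by rw [hBxy]; exact hle y i) h2
              exact ι.injective this
          obtain ⟨t, htI, hne⟩ := hI₀ (YF x) (YF y) hψx hψy hYne
          refine ⟨m.succAbove t, Set.mem_insert_of_mem _ ⟨t, htI, rfl⟩, ?_⟩
          intro heq
          apply hne
          simp only [hYFdef, hMx, hMy]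
          rw [hBxy, heq]
        · exact ⟨m, Set.mem_insert _ _, hmm⟩

lemma lbCore (d : ℕ) (α : Type) :
    ∀ (n : ℕ) (C X : Type) (φ : (Fin d → X) → C)
      (P : Set (Fin d → α)), P.Finite → ∀ (I : Set (Fin d)),
      IsDistinguisher P I → I.ncard ≤ n + 1 → ∀ (Y : Set X),
      cardPlus #C n < #Y → ℵ₀ ≤ #Y →
    ∃ g : Fin d → α → X, (∀ i a, g i a ∈ Y) ∧
      (∀ i ∈ I, Set.InjOn (g i) ((fun p => p i) '' P)) ∧
      (∀ p ∈ P, ∀ q ∈ P, φ (fun i => g i (p i)) = φ (fun i => g i (q i))) := by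
  intro n
  induction n with
  | zero =>
    intro C X φ P hP I hI hIc Y hY1 hY2
    classical
    have hYne : Y.Nonempty := by
      rw [← Set.nonempty_coe_sort, ← Cardinal.mk_ne_zero_iff]
      intro h0
      rw [h0] at hY2
      exact Cardinal.aleph0_ne_zero (le_antisymm hY2 zero_le)
    obtain ⟨y₀, hy₀⟩ := hYne
    rcases P.eq_empty_or_nonempty with rfl | ⟨p₀, hp₀⟩
    · exact ⟨fun _ _ => y₀, fun _ _ => hy₀,
        fun i _ => by simp, fun p hp => absurd hp (Set.notMem_empty p)⟩
    rcases Nat.le_one_iff_eq_zero_or_eq_one.mp hIc with h0 | h1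
    · have hIe : I = ∅ := (Set.ncard_eq_zero (Set.toFinite I)).mp h0
      have hPsub : ∀ p ∈ P, ∀ q ∈ P, p = q := by
        intro p hp q hq
        by_contra hne
        obtain ⟨i, hi, _⟩ := hI p hp q hq hne
        rw [hIe] at hi
        exact absurd hi (Set.notMem_empty i)
      refine ⟨fun _ _ => y₀, fun _ _ => hy₀, ?_, ?_⟩
      · intro i hi; rw [hIe] at hi; exact absurd hi (Set.notMem_empty i)
      · intro p hp q hq; rw [hPsub p hp q hq]
    · obtain ⟨i₀, hi₀⟩ := Set.ncard_eq_one.mp h1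
      set V : Set α := (fun p => p i₀) '' P with hVdef
      have hVfin : V.Finite := hP.image _
      haveI := hVfin.fintype
      set r := Fintype.card V with hrdef
      set en : V ≃ Fin r := Fintype.equivFin V with hendef
      set h : Y → C := fun v => φ (fun i => if i = i₀ then v.1 else y₀) with hhdef
      obtain ⟨t, tinj, tmono⟩ := pigeonhole h r (by
        have h1 : #C < #Y := by rwa [cardPlus_zero] at hY1
        exact Cardinal.mul_lt_of_lt hY2 h1 (lt_of_lt_of_le (Cardinal.nat_lt_aleph0 r) hY2))
      refine ⟨fun i a => if i = i₀ then (if ha : a ∈ V then (t (en ⟨a, ha⟩)).1 else y₀) else y₀,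
        ?_, ?_, ?_⟩
      · intro i a; dsimp only; split_ifs
        exacts [(t _).2, hy₀, hy₀]
      · intro i hi
        rw [hi₀, Set.mem_singleton_iff] at hi
        subst hi
        intro a ha b hb hab
        simp only [if_pos rfl] at hab
        rw [dif_pos ha, dif_pos hb] at hab
        have h1 : t (en ⟨a, ha⟩) = t (en ⟨b, hb⟩) := Subtype.ext hab
        have h2 := en.injective (tinj h1)
        exact congrArg Subtype.val h2
      · intro p hp q hq
        have hkey : ∀ p', (hp' : p' ∈ P) →
            φ (fun i => if i = i₀ then
                (if ha : p' i ∈ V then (t (en ⟨p' i, ha⟩)).1 else y₀) else y₀)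
              = h (t (en ⟨p' i₀, ⟨p', hp', rfl⟩⟩)) := by
          intro p' hp'
          apply congrArg φ
          funext i
          by_cases hii : i = i₀
          · subst hii
            simp only [if_pos rfl, hhdef]
            rw [dif_pos ⟨p', hp', rfl⟩]
          · simp only [if_neg hii, hhdef]
        rw [hkey p hp, hkey q hq]
        exact tmono _ _
  | succ n IH =>
    intro C X φ P hP I hI hIc Y hY1 hY2
    classical
    by_cases hsmall : I.ncard ≤ n + 1
    · exact IH C X φ P hP I hI hsmall Y
        (lt_of_le_of_lt (cardPlus_le_cardPlus_succ _ _) hY1) hY2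
    have hYne : Y.Nonempty := by
      rw [← Set.nonempty_coe_sort, ← Cardinal.mk_ne_zero_iff]
      intro h0
      rw [h0] at hY2
      exact Cardinal.aleph0_ne_zero (le_antisymm hY2 zero_le)
    obtain ⟨y₀, hy₀⟩ := hYne
    rcases P.eq_empty_or_nonempty with rfl | ⟨p₀, hp₀⟩
    · exact ⟨fun _ _ => y₀, fun _ _ => hy₀,
        fun i _ => by simp, fun p hp => absurd hp (Set.notMem_empty p)⟩
    have hIne : I.Nonempty := Set.nonempty_of_ncard_ne_zero (by omega)
    obtain ⟨istar, histar⟩ := hIne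
    set a₀ := p₀ istar with ha₀def
    set I' := I \ {istar} with hI'def
    have hI'c : I'.ncard ≤ n + 1 := by
      have h1 : I'.ncard = I.ncard - 1 := by
        rw [hI'def]
        exact Set.ncard_diff_singleton_of_mem histar
      omega
    set σ : (Fin d → α) → (Fin d → α) := fun p i => if i ∈ I' then p i else a₀ with hσdef
    set Pstar := σ '' P with hPstardef
    have hPstarfin : Pstar.Finite := hP.image _
    have hDstar : IsDistinguisher Pstar I' := by
      rintro x hx y hy hxy
      obtain ⟨i, hne⟩ := Function.ne_iff.mp hxy
      obtain ⟨p, hp, rfl⟩ := hx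
      obtain ⟨q, hq, rfl⟩ := hy
      by_cases hiI : i ∈ I'
      · exact ⟨i, hiI, hne⟩
      · exfalso; apply hne; simp only [hσdef, if_neg hiI]
    have hσV : ∀ i ∈ I', (fun p => p i) '' Pstar = (fun p => p i) '' P := by
      intro i hi
      rw [hPstardef, Set.image_image]
      apply congrArg (· '' P)
      funext p
      simp only [hσdef, if_pos hi]
    set V : Set α := (fun p => p istar) '' P with hVdef
    have hVfin : V.Finite := hP.image _
    haveI := hVfin.fintype
    set r := Fintype.card V with hrdef
    set en : V ≃ Fin r := Fintype.equivFin V with hendef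
    have hmemV : p₀ istar ∈ V := ⟨p₀, hp₀, rfl⟩
    rcases lt_or_ge #C ℵ₀ with hfin | hinf
    · -- finitely many colors
      obtain ⟨ν, hν⟩ := Cardinal.lt_aleph0.mp hfin
      set N := ν * r + 1 with hNdef
      have hNY : (N : Cardinal) ≤ #Y :=
        le_of_lt (lt_of_lt_of_le (Cardinal.nat_lt_aleph0 N) hY2)
      obtain ⟨tN⟩ : Nonempty (Fin N ↪ Y) := by
        rw [← Cardinal.le_def, Cardinal.mk_fin]; exact hNY
      set χ : (Fin d → X) → (Fin N → C) :=
        fun x jj => φ (Function.update x istar (tN jj).1) with hχdef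
      have hχcard : cardPlus #(Fin N → C) n < #Y := by
        refine lt_of_lt_of_le (cardPlus_lt_aleph0 ?_ n) hY2
        have : #(Fin N → C) = #C ^ (N : Cardinal) := by
          rw [← Cardinal.mk_fin N, Cardinal.power_def]
        rw [this]
        exact Cardinal.power_lt_aleph0 hfin (Cardinal.nat_lt_aleph0 N)
      obtain ⟨gh, hghY, hghinj, hghmono⟩ :=
        IH (Fin N → C) X χ Pstar hPstarfin I' hDstar hI'c Y hχcard hY2
      set cF : Fin N → C := fun jj => χ (fun i => gh i (σ p₀ i)) jj with hcFdef
      obtain ⟨u, uinj, umono⟩ := pigeonhole cF r (by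
        rw [Cardinal.mk_fin, hν]
        have : ((ν : Cardinal) * (r : Cardinal)) = ((ν * r : ℕ) : Cardinal) := by
          exact_mod_cast rfl
        rw [this]
        exact_mod_cast Nat.lt_succ_self (ν * r))
      refine ⟨fun i a => if i = istar then
          (if ha : a ∈ V then (tN (u (en ⟨a, ha⟩))).1 else y₀)
          else (if i ∈ I' then gh i a else gh i a₀), ?_, ?_, ?_⟩
      · intro i a; dsimp only; split_ifs
        exacts [(tN _).2, hy₀, hghY _ _, hghY _ _]
      · intro i hi
        by_cases hii : i = istar
        · subst hii
          intro a ha b hb hab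
          simp only [if_pos rfl] at hab
          rw [dif_pos ha, dif_pos hb] at hab
          have h1 : tN (u (en ⟨a, ha⟩)) = tN (u (en ⟨b, hb⟩)) := Subtype.ext hab
          exact congrArg Subtype.val (en.injective (uinj (tN.injective h1)))
        · have hiI' : i ∈ I' := ⟨hi, hii⟩
          intro a ha b hb hab
          simp only [if_neg hii, if_pos hiI'] at hab
          have := hghinj i hiI'
          rw [hσV i hiI'] at this
          exact this ha hb hab
      · intro p hp q hq
        have hkey : ∀ p', (hp' : p' ∈ P) →
            (fun i => (fun i a => if i = istar then
              (if ha : a ∈ V then (tN (u (en ⟨a, ha⟩))).1 else y₀)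
              else (if i ∈ I' then gh i a else gh i a₀)) i (p' i))
            = Function.update (fun i => gh i (σ p' i)) istar
                (tN (u (en ⟨p' istar, ⟨p', hp', rfl⟩⟩))).1 := by
          intro p' hp'
          funext i
          by_cases hii : i = istar
          · subst hii
            simp only [if_pos rfl, if_true, eq_self_iff_true, Function.update_self]
            rw [dif_pos ⟨p', hp', rfl⟩]
          · simp only [if_neg hii, Function.update_of_ne hii]
            by_cases hiI' : i ∈ I'
            · simp only [if_pos hiI', hσdef, if_pos hiI']
            · simp only [if_neg hiI', hσdef]
        have hval : ∀ p', (hp' : p' ∈ P) →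
            φ (fun i => (fun i a => if i = istar then
              (if ha : a ∈ V then (tN (u (en ⟨a, ha⟩))).1 else y₀)
              else (if i ∈ I' then gh i a else gh i a₀)) i (p' i))
            = cF (u (en ⟨p' istar, ⟨p', hp', rfl⟩⟩)) := by
          intro p' hp'
          rw [hkey p' hp']
          have h1 : φ (Function.update (fun i => gh i (σ p' i)) istar
              (tN (u (en ⟨p' istar, ⟨p', hp', rfl⟩⟩))).1)
              = χ (fun i => gh i (σ p' i)) (u (en ⟨p' istar, ⟨p', hp', rfl⟩⟩)) := rfl
          rw [h1]
          have h2 := hghmono (σ p') (Set.mem_image_of_mem σ hp') (σ p₀)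
            (Set.mem_image_of_mem σ hp₀)
          exact congrFun h2 _
        rw [hval p hp, hval q hq]
        exact umono _ _
    · -- infinitely many colors
      set ρ := cardPlus #C (n + 1) with hρdef
      have hρinf : ℵ₀ ≤ ρ := aleph0_le_cardPlus hinf _
      have hρY : ρ < #Y := hY1
      obtain ⟨S, hS⟩ := Cardinal.le_mk_iff_exists_set.mp hρY.le
      set Y' : Set X := Subtype.val '' S with hY'def
      have hY'card : #Y' = ρ := by
        rw [hY'def, Cardinal.mk_image_eq Subtype.val_injective, hS]
      have hY'sub : Y' ⊆ Y := by
        rintro _ ⟨⟨v, hv⟩, _, rfl⟩; exact hv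
      have hIH : ∀ v : Y, ∃ g : Fin d → α → X, (∀ i a, g i a ∈ Y') ∧
          (∀ i ∈ I', Set.InjOn (g i) ((fun p => p i) '' Pstar)) ∧
          (∀ p ∈ Pstar, ∀ q ∈ Pstar,
            φ (Function.update (fun i => g i (p i)) istar v.1)
            = φ (Function.update (fun i => g i (q i)) istar v.1)) := by
        intro v
        exact IH C X (fun x => φ (Function.update x istar v.1)) Pstar hPstarfin I' hDstar
          hI'c Y' (by rw [hY'card, hρdef, cardPlus_succ]; exact Order.lt_succ _)
          (by rw [hY'card]; exact hρinf)
      choose G hGY hGinj hGmono using hIH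
      set Pfin := hP.toFinset with hPfindef
      set Rec : Y → (Pfin → Fin d → Y') :=
        fun v q i => ⟨G v i (σ q.1 i), hGY v i _⟩ with hRecdef
      set cRec : Y → C :=
        fun v => φ (Function.update (fun i => G v i (σ p₀ i)) istar v.1) with hcRecdef
      set H : Y → (Pfin → Fin d → Y') × C := fun v => (Rec v, cRec v) with hHdef
      obtain ⟨t, tinj, tmono⟩ := pigeonhole H r (by
        have hprod : #((Pfin → Fin d → Y') × C) ≤ ρ := by
          have inner : #(Fin d → Y') ≤ ρ := mk_arrow_le hρinf (le_of_eq hY'card)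
          have outer : #(Pfin → Fin d → Y') ≤ ρ := mk_arrow_le hρinf inner
          have heq : #((Pfin → Fin d → Y') × C) = #(Pfin → Fin d → Y') * #C := by
            rw [Cardinal.mk_prod, Cardinal.lift_id, Cardinal.lift_id]
          rw [heq]
          have hCρ : #C ≤ ρ := by rw [hρdef]; exact le_cardPlus _ _
          calc #(Pfin → Fin d → Y') * #C ≤ ρ * ρ :=
                mul_le_mul' outer hCρ
            _ = ρ := Cardinal.mul_eq_self hρinf
        calc #((Pfin → Fin d → Y') × C) * r ≤ ρ * r := mul_le_mul' hprod le_rfl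
          _ < #Y := Cardinal.mul_lt_of_lt hY2 hρY
              (lt_of_lt_of_le (Cardinal.nat_lt_aleph0 r) hY2))
      set j₀ := en ⟨p₀ istar, hmemV⟩ with hj₀def
      set v₁ := t j₀ with hv₁def
      have hrec : ∀ jj, Rec (t jj) = Rec v₁ :=
        fun jj => congrArg Prod.fst (tmono jj j₀)
      have hcrec : ∀ jj, cRec (t jj) = cRec v₁ :=
        fun jj => congrArg Prod.snd (tmono jj j₀)
      have hGagree : ∀ jj, ∀ p', (hp' : p' ∈ P) → ∀ i,
          G (t jj) i (σ p' i) = G v₁ i (σ p' i) := by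
        intro jj p' hp' i
        have hmem : p' ∈ Pfin := hP.mem_toFinset.mpr hp'
        have := congrFun (congrFun (hrec jj) ⟨p', hmem⟩) i
        exact congrArg Subtype.val this
      refine ⟨fun i a => if i = istar then
          (if ha : a ∈ V then (t (en ⟨a, ha⟩)).1 else y₀)
          else (if i ∈ I' then G v₁ i a else G v₁ i a₀), ?_, ?_, ?_⟩
      · intro i a; dsimp only; split_ifs
        exacts [(t _).2, hy₀, hY'sub (hGY v₁ _ _), hY'sub (hGY v₁ _ _)]
      · intro i hi
        by_cases hii : i = istar
        · subst hii
          intro a ha b hb hab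
          simp only [if_pos rfl] at hab
          rw [dif_pos ha, dif_pos hb] at hab
          have h1 : t (en ⟨a, ha⟩) = t (en ⟨b, hb⟩) := Subtype.ext hab
          exact congrArg Subtype.val (en.injective (tinj h1))
        · have hiI' : i ∈ I' := ⟨hi, hii⟩
          intro a ha b hb hab
          simp only [if_neg hii, if_pos hiI'] at hab
          have := hGinj v₁ i hiI'
          rw [hσV i hiI'] at this
          exact this ha hb hab
      · intro p hp q hq
        have hval : ∀ p', (hp' : p' ∈ P) →
            φ (fun i => (fun i a => if i = istar then
              (if ha : a ∈ V then (t (en ⟨a, ha⟩)).1 else y₀)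
              else (if i ∈ I' then G v₁ i a else G v₁ i a₀)) i (p' i))
            = cRec v₁ := by
          intro p' hp'
          set jj := en ⟨p' istar, ⟨p', hp', rfl⟩⟩ with hjjdef
          have hkey : (fun i => (fun i a => if i = istar then
              (if ha : a ∈ V then (t (en ⟨a, ha⟩)).1 else y₀)
              else (if i ∈ I' then G v₁ i a else G v₁ i a₀)) i (p' i))
              = Function.update (fun i => G (t jj) i (σ p' i)) istar (t jj).1 := by
            funext i
            by_cases hii : i = istar
            · subst hii
              simp only [if_pos rfl, if_true, eq_self_iff_true, Function.update_self]
              rw [dif_pos ⟨p', hp', rfl⟩]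
            · simp only [if_neg hii, Function.update_of_ne hii]
              rw [hGagree jj p' hp' i]
              by_cases hiI' : i ∈ I'
              · simp only [if_pos hiI', hσdef, if_pos hiI']
              · simp only [if_neg hiI', hσdef, if_neg hiI']
          rw [hkey]
          have h2 := hGmono (t jj) (σ p') (Set.mem_image_of_mem σ hp') (σ p₀)
            (Set.mem_image_of_mem σ hp₀)
          rw [h2]
          exact hcrec jj
        rw [hval p hp, hval q hq]


/-- **Corollary 2.2.** If `𝓟` is a set of `d`-dimensional `k`-templates and `X` is infinite:
if `𝓟 = ∅` then `χ(L(X^d, 𝓟)) = 1`, and if `𝓟 ≠ ∅` then `χ(L(X^d, 𝓟)) = |X|^{-(e − 1)}`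
where `e = min {e(P) : P ∈ 𝓟}`. -/
theorem stmt_6 (d k : ℕ) (hk : 2 ≤ k) (α X : Type) [Infinite X]
    (𝓟 : Set (Set (Fin d → α))) (h𝓟 : ∀ P ∈ 𝓟, P.Finite ∧ P.ncard = k) :
    (𝓟 = ∅ → chrNum (multiTemplateEdges X 𝓟) = 1) ∧
    (𝓟 ≠ ∅ → chrNum (multiTemplateEdges X 𝓟) =
      cardMinus (Cardinal.mk X) (sInf {m : ℕ | ∃ P ∈ 𝓟, eTemplate P = m} - 1)) := by
  classical
  have hbdd : ∀ (s : Set Cardinal), BddBelow s := fun s => ⟨0, fun _ _ => zero_le⟩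
  constructor
  · -- empty case
    intro hPempty
    subst hPempty
    have hedges : multiTemplateEdges (d := d) (α := α) X ∅ = ∅ := by
      ext Q
      simp [multiTemplateEdges]
    have h1mem : (1 : Cardinal) ∈ {κ : Cardinal | ∃ (C : Type) (φ : (Fin d → X) → C),
        Cardinal.mk C = κ ∧ IsProperColoring (multiTemplateEdges (d := d) (α := α) X ∅) φ} := by
      refine ⟨PUnit, fun _ => PUnit.unit, Cardinal.mk_punit, ?_⟩
      intro s hs
      rw [hedges] at hs
      exact absurd hs (Set.notMem_empty s)
    apply le_antisymm
    · exact csInf_le (hbdd _) h1mem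
    · apply le_csInf ⟨1, h1mem⟩
      rintro κ' ⟨C, φ, rfl, _⟩
      have : Nonempty C := ⟨φ (fun _ => Classical.arbitrary X)⟩
      rw [Cardinal.one_le_iff_ne_zero, Cardinal.mk_ne_zero_iff]
      exact this
  · -- nonempty case
    intro hne
    obtain ⟨P₁, hP₁⟩ := Set.nonempty_iff_ne_empty.mpr hne
    set ES := {m : ℕ | ∃ P ∈ 𝓟, eTemplate P = m} with hESdef
    have hESne : ES.Nonempty := ⟨eTemplate P₁, P₁, hP₁, rfl⟩
    obtain ⟨P₀, hP₀mem, hP₀e⟩ := Nat.sInf_mem hESne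
    obtain ⟨hP₀fin, hP₀k⟩ := h𝓟 P₀ hP₀mem
    -- distinguisher of minimum size for P₀
    have hDSne : {m : ℕ | ∃ I : Set (Fin d), I.ncard = m ∧ IsDistinguisher P₀ I}.Nonempty := by
      refine ⟨(Set.univ : Set (Fin d)).ncard, Set.univ, rfl, ?_⟩
      intro x _ y _ hxy
      obtain ⟨i, hi⟩ := Function.ne_iff.mp hxy
      exact ⟨i, Set.mem_univ i, hi⟩
    obtain ⟨I₀, hI₀c, hI₀⟩ := Nat.sInf_mem hDSne
    -- P₀ has two distinct elements, so e ≥ 1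
    obtain ⟨p, hp, q, hq, hpq⟩ := (Set.one_lt_ncard hP₀fin).mp (by omega)
    have heP₀pos : 1 ≤ eTemplate P₀ := by
      by_contra h
      have h0 : eTemplate P₀ = 0 := by omega
      have hI₀0 : I₀.ncard = 0 := by rw [hI₀c]; exact h0
      have hI₀e : I₀ = ∅ := (Set.ncard_eq_zero (Set.toFinite I₀)).mp hI₀0
      obtain ⟨i, hi, _⟩ := hI₀ p hp q hq hpq
      rw [hI₀e] at hi
      exact absurd hi (Set.notMem_empty i)
    have hepos : 1 ≤ sInf ES := by rw [← hP₀e]; exact heP₀pos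
    set n := sInf ES - 1 with hndef
    have hen : sInf ES = n + 1 := by omega
    have heP₀ : eTemplate P₀ = n + 1 := by rw [hP₀e]; exact hen
    set κ := Cardinal.mk X with hκdef
    have hκinf : ℵ₀ ≤ κ := Cardinal.infinite_iff.mp ‹Infinite X›
    set MS := {μ : Cardinal | κ ≤ cardPlus μ n} with hMSdef
    have hMSne : MS.Nonempty := ⟨κ, le_cardPlus κ n⟩
    have hμmem : κ ≤ cardPlus (sInf MS) n := csInf_mem hMSne
    set μ := sInf MS with hμdef
    have hμinf : ℵ₀ ≤ μ := by
      by_contra h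
      push_neg at h
      exact absurd (lt_of_le_of_lt hμmem (lt_of_lt_of_le (cardPlus_lt_aleph0 h n) hκinf))
        (lt_irrefl κ)
    -- upper bound coloring
    obtain ⟨C, φ0, hCle, hCprop⟩ := ubCore μ hμinf n d X hμmem
    obtain ⟨emb⟩ : Nonempty (C ↪ Quotient.out μ) := by
      rw [← Cardinal.le_def, Cardinal.mk_out]
      exact hCle
    set φ1 : (Fin d → X) → Quotient.out μ := fun x => emb (φ0 x) with hφ1def
    have hproper : IsProperColoring (multiTemplateEdges X 𝓟) φ1 := by
      rintro s ⟨P, hPmem, f, finj, rfl, fhom⟩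
      obtain ⟨hPfin, hPk⟩ := h𝓟 P hPmem
      have hPne : P.Nonempty := Set.nonempty_of_ncard_ne_zero (by omega)
      obtain ⟨p₁, hp₁⟩ := hPne
      by_contra hmono
      push_neg at hmono
      obtain ⟨I, hIn, hIdist⟩ := hCprop (φ0 (f p₁))
      have hdist : IsDistinguisher P I := by
        intro a ha b hb hab
        have hfne : f a ≠ f b := fun h => hab (finj ha hb h)
        have h1 : φ0 (f a) = φ0 (f p₁) :=
          emb.injective (hmono _ (Set.mem_image_of_mem f ha) _ (Set.mem_image_of_mem f hp₁))
        have h2 : φ0 (f b) = φ0 (f p₁) :=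
          emb.injective (hmono _ (Set.mem_image_of_mem f hb) _ (Set.mem_image_of_mem f hp₁))
        obtain ⟨i, hiI, hnei⟩ := hIdist (f a) (f b) h1 h2 hfne
        exact ⟨i, hiI, fun h => hnei (fhom a ha b hb i h)⟩
      have hle1 : eTemplate P ≤ I.ncard := Nat.sInf_le ⟨I, rfl, hdist⟩
      have hle2 : sInf ES ≤ eTemplate P := Nat.sInf_le ⟨P, hPmem, rfl⟩
      omega
    have hμS : μ ∈ {κ' : Cardinal | ∃ (C : Type) (φ : (Fin d → X) → C),
        Cardinal.mk C = κ' ∧ IsProperColoring (multiTemplateEdges X 𝓟) φ} :=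
      ⟨Quotient.out μ, φ1, Cardinal.mk_out μ, hproper⟩
    -- lower bound
    have hLB : ∀ κ' ∈ {κ' : Cardinal | ∃ (C : Type) (φ : (Fin d → X) → C),
        Cardinal.mk C = κ' ∧ IsProperColoring (multiTemplateEdges X 𝓟) φ}, μ ≤ κ' := by
      rintro κ' ⟨C', φ', rfl, hprop'⟩
      by_contra hlt
      push_neg at hlt
      have hnotin : Cardinal.mk C' ∉ MS := fun h =>
        absurd (csInf_le (hbdd _) h) (not_le.mpr hlt)
      have hgt : cardPlus (Cardinal.mk C') n < κ := not_le.mp hnotin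
      obtain ⟨g, hgY, hginj, hgmono⟩ := lbCore d α n C' X φ' P₀ hP₀fin I₀ hI₀
        (by have h' : I₀.ncard = eTemplate P₀ := hI₀c; omega) Set.univ
        (by rw [Cardinal.mk_univ]; exact hgt) (by rw [Cardinal.mk_univ]; exact hκinf)
      set f : (Fin d → α) → (Fin d → X) := fun p i => g i (p i) with hfdef
      have hfinj : Set.InjOn f P₀ := by
        intro a ha b hb hab
        by_contra hne
        obtain ⟨i, hiI, hnei⟩ := hI₀ a ha b hb hne
        exact hnei (hginj i hiI (Set.mem_image_of_mem _ ha) (Set.mem_image_of_mem _ hb)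
          (congrFun hab i))
      have hedge : f '' P₀ ∈ multiTemplateEdges X 𝓟 :=
        ⟨P₀, hP₀mem, f, hfinj, rfl, fun a _ b _ i hi => by simp only [hfdef, hi]⟩
      obtain ⟨x, hx, y, hy, hxy⟩ := hprop' _ hedge
      obtain ⟨a, ha, rfl⟩ := hx
      obtain ⟨b, hb, rfl⟩ := hy
      exact hxy (hgmono a ha b hb)
    have : chrNum (multiTemplateEdges X 𝓟) = μ :=
      le_antisymm (csInf_le (hbdd _) hμS) (le_csInf ⟨μ, hμS⟩ hLB)
    rw [this]
    rfl
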